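/- Let σ be the uniform distribution on the sphere of radius √n in ℝ^n (n ≥ 4), h a halfspace with unit normal w, and f : ℝ^n → {-1,1} with dist_σ(f,h) = ε ∈ (0,1/2). Then ‖E[x·h(x)]‖ − ‖E[x·f(x)]‖ ≤ K·ε·√(ln(1/ε)) for some universal constant K. -/

import Mathlib

open MeasureTheory
open scoped RealInnerProductSpace

namespace Stmt15Aux

variable {n : ℕ}

/-- transfer integrals along an invariance isometry -/
lemma transfer {σ : Measure (EuclideanSpace ℝ (Fin n))}
    (hinv : ∀ e : EuclideanSpace ℝ (Fin n) ≃ₗᵢ[ℝ] EuclideanSpace ℝ (Fin n), σ.map e = σ)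
    (e : EuclideanSpace ℝ (Fin n) ≃ₗᵢ[ℝ] EuclideanSpace ℝ (Fin n))
    (g : EuclideanSpace ℝ (Fin n) → ℝ) (hg : Continuous g) :
    ∫ x, g x ∂σ = ∫ x, g (e x) ∂σ := by
  conv_lhs => rw [← hinv e]
  exact integral_map e.continuous.measurable.aemeasurable hg.aestronglyMeasurable

lemma integrable_of_bound {σ : Measure (EuclideanSpace ℝ (Fin n))} [IsProbabilityMeasure σ]
    (g : EuclideanSpace ℝ (Fin n) → ℝ) (hm : AEStronglyMeasurable g σ) (C : ℝ)
    (hb : ∀ᵐ x ∂σ, |g x| ≤ C) : Integrable g σ :=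
  (integrable_const C).mono' hm (by simpa [Real.norm_eq_abs] using hb)

lemma ae_sphere {σ : Measure (EuclideanSpace ℝ (Fin n))} [IsProbabilityMeasure σ]
    (hS : σ {x | ‖x‖ = Real.sqrt n} = 1) : ∀ᵐ x ∂σ, ‖x‖ = Real.sqrt n := by
  have hmeas : MeasurableSet {x : EuclideanSpace ℝ (Fin n) | ‖x‖ = Real.sqrt n} :=
    (isClosed_eq continuous_norm continuous_const).measurableSet
  have hc := measure_compl hmeas (measure_ne_top σ _)
  rw [hS, measure_univ, tsub_self] at hc
  rw [ae_iff]
  convert hc using 2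
  rfl

lemma int_G_eq {σ : Measure (EuclideanSpace ℝ (Fin n))}
    (hinv : ∀ e : EuclideanSpace ℝ (Fin n) ≃ₗᵢ[ℝ] EuclideanSpace ℝ (Fin n), σ.map e = σ)
    {u v : EuclideanSpace ℝ (Fin n)} (hu : ‖u‖ = 1) (hv : ‖v‖ = 1)
    (G : ℝ → ℝ) (hG : Continuous G) :
    ∫ x, G ⟪u, x⟫ ∂σ = ∫ x, G ⟪v, x⟫ ∂σ := by
  set e := Submodule.reflection (Submodule.span ℝ {v - u})ᗮ with he
  have hev : e v = u := Submodule.reflection_sub (hv.trans hu.symm)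
  have h1 : ∫ x, G ⟪u, x⟫ ∂σ = ∫ x, G ⟪u, e x⟫ ∂σ :=
    transfer hinv e _ (hG.comp (continuous_const.inner continuous_id))
  rw [h1]
  refine integral_congr_ae (Filter.Eventually.of_forall fun x => ?_)
  show G ⟪u, e x⟫ = G ⟪v, x⟫
  rw [← hev, LinearIsometryEquiv.inner_map_map]

lemma int_pair_eq {σ : Measure (EuclideanSpace ℝ (Fin n))}
    (hinv : ∀ e : EuclideanSpace ℝ (Fin n) ≃ₗᵢ[ℝ] EuclideanSpace ℝ (Fin n), σ.map e = σ)
    {u v v' : EuclideanSpace ℝ (Fin n)} (hv : ‖v‖ = 1) (hv' : ‖v'‖ = 1)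
    (huv : ⟪u, v⟫ = 0) (huv' : ⟪u, v'⟫ = 0)
    (G : ℝ → ℝ → ℝ) (hG : Continuous fun p : ℝ × ℝ => G p.1 p.2) :
    ∫ x, G ⟪u, x⟫ ⟪v, x⟫ ∂σ = ∫ x, G ⟪u, x⟫ ⟪v', x⟫ ∂σ := by
  set e := Submodule.reflection (Submodule.span ℝ {v' - v})ᗮ with he
  have hev : e v' = v := Submodule.reflection_sub (hv'.trans hv.symm)
  have hmem : u ∈ (Submodule.span ℝ {v' - v})ᗮ := by
    rw [Submodule.mem_orthogonal_singleton_iff_inner_left, inner_sub_right, huv, huv']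
    ring
  have heu : e u = u := Submodule.reflection_mem_subspace_eq_self hmem
  have h1 : ∫ x, G ⟪u, x⟫ ⟪v, x⟫ ∂σ = ∫ x, G ⟪u, e x⟫ ⟪v, e x⟫ ∂σ :=
    transfer hinv e _ (hG.comp ((continuous_const.inner continuous_id).prodMk
      (continuous_const.inner continuous_id)))
  rw [h1]
  refine integral_congr_ae (Filter.Eventually.of_forall fun x => ?_)
  show G ⟪u, e x⟫ ⟪v, e x⟫ = G ⟪u, x⟫ ⟪v', x⟫
  have h2 : (⟪u, e x⟫ : ℝ) = ⟪u, x⟫ := by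
    rw [show (⟪u, e x⟫ : ℝ) = ⟪e u, e x⟫ by rw [heu], LinearIsometryEquiv.inner_map_map]
  have h3 : (⟪v, e x⟫ : ℝ) = ⟪v', x⟫ := by
    rw [show (⟪v, e x⟫ : ℝ) = ⟪e v', e x⟫ by rw [hev], LinearIsometryEquiv.inner_map_map]
  rw [h2, h3]

section MomentRec

variable {σ : Measure (EuclideanSpace ℝ (Fin n))} [IsProbabilityMeasure σ]

/-- invariance implies the moment function is constant along rotated directions -/
lemma phi_const
    (hinv : ∀ e : EuclideanSpace ℝ (Fin n) ≃ₗᵢ[ℝ] EuclideanSpace ℝ (Fin n), σ.map e = σ)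
    {u v : EuclideanSpace ℝ (Fin n)} (hu : ‖u‖ = 1) (hv : ‖v‖ = 1) (huv : ⟪u, v⟫ = 0)
    (m : ℕ) (θ : ℝ) :
    ∫ x, (⟪u, x⟫ * Real.cos θ + ⟪v, x⟫ * Real.sin θ) ^ m ∂σ = ∫ x, ⟪u, x⟫ ^ m ∂σ := by
  set uθ : EuclideanSpace ℝ (Fin n) := Real.cos θ • u + Real.sin θ • v with huθ
  have hinner : ∀ x, (⟪uθ, x⟫ : ℝ) = ⟪u, x⟫ * Real.cos θ + ⟪v, x⟫ * Real.sin θ := by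
    intro x
    rw [huθ, inner_add_left, real_inner_smul_left, real_inner_smul_left]
    ring
  have hnorm : ‖uθ‖ = 1 := by
    have h2 : (⟪uθ, uθ⟫ : ℝ) = 1 := by
      rw [huθ, inner_add_left, inner_add_right, inner_add_right, real_inner_smul_left,
        real_inner_smul_left, real_inner_smul_left, real_inner_smul_left,
        real_inner_smul_right, real_inner_smul_right, real_inner_smul_right,
        real_inner_smul_right, real_inner_self_eq_norm_sq, real_inner_self_eq_norm_sq,
        hu, hv, huv]
      have hvu : (⟪v, u⟫ : ℝ) = 0 := by rw [real_inner_comm]; exact huv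
      rw [hvu]
      linear_combination Real.cos_sq_add_sin_sq θ
    have h3 : ‖uθ‖ ^ 2 = 1 := by rw [← real_inner_self_eq_norm_sq]; exact h2
    nlinarith [norm_nonneg uθ]
  have := int_G_eq hinv hnorm hu (fun s => s ^ m) (continuous_pow m)
  rw [← this]
  refine integral_congr_ae (Filter.Eventually.of_forall fun x => ?_)
  show (⟪u, x⟫ * Real.cos θ + ⟪v, x⟫ * Real.sin θ) ^ m = (fun s => s ^ m) (⟪uθ, x⟫ : ℝ)
  rw [hinner]

/-- the key recursion identity: `∫ a^(2j+2) = (2j+1) ∫ a^(2j) b^2`. -/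
lemma moment_rec
    (hinv : ∀ e : EuclideanSpace ℝ (Fin n) ≃ₗᵢ[ℝ] EuclideanSpace ℝ (Fin n), σ.map e = σ)
    (hae : ∀ᵐ x ∂σ, ‖x‖ = Real.sqrt n)
    {u v : EuclideanSpace ℝ (Fin n)} (hu : ‖u‖ = 1) (hv : ‖v‖ = 1) (huv : ⟪u, v⟫ = 0)
    (j : ℕ) :
    ∫ x, ⟪u, x⟫ ^ (2 * j + 2) ∂σ =
      (2 * (j : ℝ) + 1) * ∫ x, ⟪u, x⟫ ^ (2 * j) * ⟪v, x⟫ ^ 2 ∂σ := by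
  classical
  set m : ℕ := 2 * j + 2 with hm
  set a : EuclideanSpace ℝ (Fin n) → ℝ := fun x => ⟪u, x⟫ with ha
  set b : EuclideanSpace ℝ (Fin n) → ℝ := fun x => ⟪v, x⟫ with hb
  have hca : Continuous a := continuous_const.inner continuous_id
  have hcb : Continuous b := continuous_const.inner continuous_id
  have habd : ∀ᵐ x ∂σ, |a x| ≤ Real.sqrt n := by
    filter_upwards [hae] with x hx
    calc |a x| ≤ ‖u‖ * ‖x‖ := abs_real_inner_le_norm u x
    _ = Real.sqrt n := by rw [hu, one_mul, hx]
  have hbbd : ∀ᵐ x ∂σ, |b x| ≤ Real.sqrt n := by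
    filter_upwards [hae] with x hx
    calc |b x| ≤ ‖v‖ * ‖x‖ := abs_real_inner_le_norm v x
    _ = Real.sqrt n := by rw [hv, one_mul, hx]
  -- the functions c θ x and derivatives
  set c : ℝ → EuclideanSpace ℝ (Fin n) → ℝ := fun θ x => a x * Real.cos θ + b x * Real.sin θ
    with hc
  set c' : ℝ → EuclideanSpace ℝ (Fin n) → ℝ :=
    fun θ x => a x * (-Real.sin θ) + b x * Real.cos θ with hc'
  have hcd : ∀ x θ, HasDerivAt (fun θ => c θ x) (c' θ x) θ := fun x θ => by
    rw [hc, hc']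
    simpa [mul_neg] using ((Real.hasDerivAt_cos θ).const_mul (a x)).fun_add
      ((Real.hasDerivAt_sin θ).const_mul (b x))
  have hccont : ∀ θ, Continuous fun x => c θ x := fun θ =>
    (hca.mul continuous_const).add (hcb.mul continuous_const)
  have hccont' : ∀ θ, Continuous fun x => c' θ x := fun θ =>
    (hca.mul continuous_const).add (hcb.mul continuous_const)
  have hcbd : ∀ᵐ x ∂σ, ∀ θ, |c θ x| ≤ 2 * Real.sqrt n := by
    filter_upwards [habd, hbbd] with x h1 h2
    intro θ
    calc |c θ x| ≤ |a x * Real.cos θ| + |b x * Real.sin θ| := abs_add_le _ _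
    _ = |a x| * |Real.cos θ| + |b x| * |Real.sin θ| := by rw [abs_mul, abs_mul]
    _ ≤ Real.sqrt n * 1 + Real.sqrt n * 1 := by
        gcongr
        · exact Real.abs_cos_le_one θ
        · exact Real.abs_sin_le_one θ
    _ = 2 * Real.sqrt n := by ring
  have hcbd' : ∀ᵐ x ∂σ, ∀ θ, |c' θ x| ≤ 2 * Real.sqrt n := by
    filter_upwards [habd, hbbd] with x h1 h2
    intro θ
    calc |c' θ x| ≤ |a x * (-Real.sin θ)| + |b x * Real.cos θ| := abs_add_le _ _
    _ = |a x| * |Real.sin θ| + |b x| * |Real.cos θ| := by rw [abs_mul, abs_mul, abs_neg]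
    _ ≤ Real.sqrt n * 1 + Real.sqrt n * 1 := by
        gcongr
        · exact Real.abs_sin_le_one θ
        · exact Real.abs_cos_le_one θ
    _ = 2 * Real.sqrt n := by ring
  have hsqrtpos : (0:ℝ) ≤ Real.sqrt n := Real.sqrt_nonneg n
  -- Step 2 : the integral of the first derivative vanishes
  have step2 : ∀ θ₀ : ℝ,
      (Integrable (fun x => (m : ℝ) * c θ₀ x ^ (2 * j + 1) * c' θ₀ x) σ) ∧
      ∫ x, (m : ℝ) * c θ₀ x ^ (2 * j + 1) * c' θ₀ x ∂σ = 0 := by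
    intro θ₀
    have key := hasDerivAt_integral_of_dominated_loc_of_deriv_le
      (F := fun θ x => c θ x ^ m)
      (F' := fun θ x => (m : ℝ) * c θ x ^ (2 * j + 1) * c' θ x)
      (x₀ := θ₀) (bound := fun _ => (m : ℝ) * (2 * Real.sqrt n) ^ m)
      (s := Metric.ball θ₀ 1) (Metric.ball_mem_nhds θ₀ one_pos)
      (Filter.Eventually.of_forall fun θ => ((hccont θ).pow m).aestronglyMeasurable)
      ?_ (((continuous_const.mul ((hccont θ₀).pow _)).mul (hccont' θ₀)).aestronglyMeasurable)
      ?_ (integrable_const (μ := σ) _) ?_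
    · obtain ⟨hint, hder⟩ := key
      refine ⟨hint, ?_⟩
      have hconst : (fun θ => ∫ x, c θ x ^ m ∂σ) = fun _ => ∫ x, a x ^ m ∂σ :=
        funext fun θ => phi_const hinv hu hv huv m θ
      have hzero : HasDerivAt (fun θ => ∫ x, c θ x ^ m ∂σ) 0 θ₀ := by
        rw [hconst]; exact hasDerivAt_const _ _
      exact (hder.unique hzero)
    · exact integrable_of_bound _ ((hccont θ₀).pow m).aestronglyMeasurable
        ((2 * Real.sqrt n) ^ m)
        (by filter_upwards [hcbd] with x hx
            rw [abs_pow]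
            exact pow_le_pow_left₀ (abs_nonneg _) (hx θ₀) m)
    · filter_upwards [hcbd, hcbd'] with x h1 h2
      intro θ _
      rw [Real.norm_eq_abs, abs_mul, abs_mul, abs_pow, Nat.abs_cast]
      have h3 : |c θ x| ^ (2 * j + 1) ≤ (2 * Real.sqrt n) ^ (2 * j + 1) :=
        pow_le_pow_left₀ (abs_nonneg _) (h1 θ) _
      have h5 : |c θ x| ^ (2 * j + 1) * |c' θ x| ≤
          (2 * Real.sqrt n) ^ (2 * j + 1) * (2 * Real.sqrt n) :=
        mul_le_mul h3 (h2 θ) (abs_nonneg _) (by positivity)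
      calc (m : ℝ) * |c θ x| ^ (2 * j + 1) * |c' θ x|
          = (m : ℝ) * (|c θ x| ^ (2 * j + 1) * |c' θ x|) := by ring
      _ ≤ (m : ℝ) * ((2 * Real.sqrt n) ^ (2 * j + 1) * (2 * Real.sqrt n)) :=
          mul_le_mul_of_nonneg_left h5 (Nat.cast_nonneg m)
      _ = (m : ℝ) * (2 * Real.sqrt n) ^ m := by rw [hm]; ring
    · filter_upwards with x
      intro θ _
      have := (hcd x θ).fun_pow m
      simpa [hm, Nat.add_sub_cancel, mul_comm, mul_assoc, mul_left_comm] using this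
  -- second derivative functions
  set c'' : ℝ → EuclideanSpace ℝ (Fin n) → ℝ :=
    fun θ x => a x * (-Real.cos θ) + b x * (-Real.sin θ) with hc''
  have hcd2 : ∀ x θ, HasDerivAt (fun θ => c' θ x) (c'' θ x) θ := fun x θ => by
    rw [hc', hc'']
    simpa [mul_neg] using ((Real.hasDerivAt_sin θ).neg.const_mul (a x)).fun_add
      ((Real.hasDerivAt_cos θ).const_mul (b x))
  have hccont'' : ∀ θ, Continuous fun x => c'' θ x := fun θ =>
    (hca.mul continuous_const).add (hcb.mul continuous_const)
  have hcbd'' : ∀ᵐ x ∂σ, ∀ θ, |c'' θ x| ≤ 2 * Real.sqrt n := by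
    filter_upwards [habd, hbbd] with x h1 h2
    intro θ
    calc |c'' θ x| ≤ |a x * (-Real.cos θ)| + |b x * (-Real.sin θ)| := abs_add_le _ _
    _ = |a x| * |Real.cos θ| + |b x| * |Real.sin θ| := by
        rw [abs_mul, abs_mul, abs_neg, abs_neg]
    _ ≤ Real.sqrt n * 1 + Real.sqrt n * 1 := by
        gcongr
        · exact Real.abs_cos_le_one θ
        · exact Real.abs_sin_le_one θ
    _ = 2 * Real.sqrt n := by ring
  set G' : ℝ → EuclideanSpace ℝ (Fin n) → ℝ := fun θ x =>
    (m : ℝ) * ((((2 * j + 1 : ℕ) : ℝ)) * c θ x ^ (2 * j) * c' θ x * c' θ x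
      + c θ x ^ (2 * j + 1) * c'' θ x) with hG'
  have hder2 : ∀ x θ, HasDerivAt
      (fun θ => (m : ℝ) * c θ x ^ (2 * j + 1) * c' θ x) (G' θ x) θ := by
    intro x θ
    have h1 : HasDerivAt (fun θ => c θ x ^ (2 * j + 1))
        ((((2 * j + 1 : ℕ) : ℝ)) * c θ x ^ (2 * j) * c' θ x) θ := by
      simpa [Nat.add_sub_cancel] using (hcd x θ).fun_pow (2 * j + 1)
    have h2 := (h1.fun_mul (hcd2 x θ)).const_mul (m : ℝ)
    have hfun : (fun θ => (m : ℝ) * c θ x ^ (2 * j + 1) * c' θ x)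
        = fun θ => (m : ℝ) * (c θ x ^ (2 * j + 1) * c' θ x) := by
      funext θ; ring
    rw [hG', hfun]
    convert h2 using 1
  -- apply dominated differentiation at 0
  have key2 := hasDerivAt_integral_of_dominated_loc_of_deriv_le
    (F := fun θ x => (m : ℝ) * c θ x ^ (2 * j + 1) * c' θ x)
    (F' := G') (x₀ := (0:ℝ))
    (bound := fun _ => (m : ℝ) ^ 2 * (2 * Real.sqrt n) ^ m)
    (s := Metric.ball 0 1) (Metric.ball_mem_nhds 0 one_pos)
    (Filter.Eventually.of_forall fun θ =>
      ((continuous_const.mul ((hccont θ).pow _)).mul (hccont' θ)).aestronglyMeasurable)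
    (step2 0).1
    ((continuous_const.mul ((continuous_const.mul ((hccont 0).pow _)).mul
      ((hccont' 0)) |>.mul (hccont' 0) |>.add (((hccont 0).pow _).mul
      (hccont'' 0)))).aestronglyMeasurable)
    ?_ (integrable_const (μ := σ) _) ?_
  · obtain ⟨hint2, hder⟩ := key2
    have hzero : HasDerivAt (fun θ => ∫ x, (m : ℝ) * c θ x ^ (2 * j + 1) * c' θ x ∂σ) 0 0 := by
      have : (fun θ => ∫ x, (m : ℝ) * c θ x ^ (2 * j + 1) * c' θ x ∂σ) = fun _ => (0:ℝ) :=
        funext fun θ => (step2 θ).2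
      rw [this]; exact hasDerivAt_const _ _
    have hG0 : ∫ x, G' 0 x ∂σ = 0 := hder.unique hzero
    -- compute G' 0 and split the integral
    have hint_ab : Integrable (fun x => a x ^ (2 * j) * b x ^ 2) σ := by
      refine integrable_of_bound _ (((hca.pow _).mul (hcb.pow _)).aestronglyMeasurable)
        (Real.sqrt n ^ (2 * j) * Real.sqrt n ^ 2) ?_
      filter_upwards [habd, hbbd] with x h1 h2
      rw [abs_mul, abs_pow, abs_pow]
      exact mul_le_mul (pow_le_pow_left₀ (abs_nonneg _) h1 _)
        (pow_le_pow_left₀ (abs_nonneg _) h2 _) (by positivity) (by positivity)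
    have hint_a : Integrable (fun x => a x ^ (2 * j + 2)) σ := by
      refine integrable_of_bound _ ((hca.pow _).aestronglyMeasurable)
        (Real.sqrt n ^ (2 * j + 2)) ?_
      filter_upwards [habd] with x h1
      rw [abs_pow]
      exact pow_le_pow_left₀ (abs_nonneg _) h1 _
    have heval : ∀ x, G' 0 x =
        (m : ℝ) * (((2 * (j:ℝ) + 1)) * (a x ^ (2 * j) * b x ^ 2)) - (m : ℝ) * a x ^ (2 * j + 2) := by
      intro x
      rw [hG', hc, hc', hc'']
      simp only [Real.cos_zero, Real.sin_zero]
      push_cast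
      ring
    have hsplit : ∫ x, G' 0 x ∂σ =
        (m : ℝ) * ((2 * (j:ℝ) + 1) * ∫ x, a x ^ (2 * j) * b x ^ 2 ∂σ)
          - (m : ℝ) * ∫ x, a x ^ (2 * j + 2) ∂σ := by
      rw [show (fun x => G' 0 x) = fun x =>
        (m : ℝ) * (((2 * (j:ℝ) + 1)) * (a x ^ (2 * j) * b x ^ 2)) - (m : ℝ) * a x ^ (2 * j + 2)
        from funext heval]
      rw [integral_sub ((hint_ab.const_mul _).const_mul _) (hint_a.const_mul _),
        integral_const_mul, integral_const_mul, integral_const_mul]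
    rw [hsplit] at hG0
    have hmne : (m : ℝ) ≠ 0 := by rw [hm]; positivity
    have := sub_eq_zero.mp hG0
    have h9 : (m : ℝ) * ∫ x, a x ^ (2 * j + 2) ∂σ =
        (m : ℝ) * ((2 * (j:ℝ) + 1) * ∫ x, a x ^ (2 * j) * b x ^ 2 ∂σ) := this.symm
    have := mul_left_cancel₀ hmne h9
    exact this
  · filter_upwards [hcbd, hcbd', hcbd''] with x h1 h2 h3
    intro θ _
    rw [hG', Real.norm_eq_abs]
    have hs : (0:ℝ) ≤ 2 * Real.sqrt n := by positivity
    have hcp : |c θ x| ^ (2 * j) ≤ (2 * Real.sqrt n) ^ (2 * j) :=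
      pow_le_pow_left₀ (abs_nonneg _) (h1 θ) _
    have hcp1 : |c θ x| ^ (2 * j + 1) ≤ (2 * Real.sqrt n) ^ (2 * j + 1) :=
      pow_le_pow_left₀ (abs_nonneg _) (h1 θ) _
    have eA : |((2 * j + 1 : ℕ) : ℝ) * c θ x ^ (2 * j) * c' θ x * c' θ x| ≤
        ((2 * j + 1 : ℕ) : ℝ) * (2 * Real.sqrt n) ^ (2 * j) * (2 * Real.sqrt n)
          * (2 * Real.sqrt n) := by
      rw [abs_mul, abs_mul, abs_mul, abs_pow, Nat.abs_cast]
      refine mul_le_mul (mul_le_mul (mul_le_mul_of_nonneg_left hcp (Nat.cast_nonneg _))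
        (h2 θ) (abs_nonneg _) (by positivity)) (h2 θ) (abs_nonneg _) (by positivity)
    have eB : |c θ x ^ (2 * j + 1) * c'' θ x| ≤
        (2 * Real.sqrt n) ^ (2 * j + 1) * (2 * Real.sqrt n) := by
      rw [abs_mul, abs_pow]
      exact mul_le_mul hcp1 (h3 θ) (abs_nonneg _) (by positivity)
    calc |(m : ℝ) * (((2 * j + 1 : ℕ) : ℝ) * c θ x ^ (2 * j) * c' θ x * c' θ x
        + c θ x ^ (2 * j + 1) * c'' θ x)|
        ≤ (m : ℝ) * (|((2 * j + 1 : ℕ) : ℝ) * c θ x ^ (2 * j) * c' θ x * c' θ x|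
          + |c θ x ^ (2 * j + 1) * c'' θ x|) := by
          rw [abs_mul, Nat.abs_cast]
          exact mul_le_mul_of_nonneg_left (abs_add_le _ _) (Nat.cast_nonneg m)
    _ ≤ (m : ℝ) * (((2 * j + 1 : ℕ) : ℝ) * (2 * Real.sqrt n) ^ (2 * j) * (2 * Real.sqrt n)
          * (2 * Real.sqrt n) + (2 * Real.sqrt n) ^ (2 * j + 1) * (2 * Real.sqrt n)) :=
          mul_le_mul_of_nonneg_left (add_le_add eA eB) (Nat.cast_nonneg m)
    _ ≤ (m : ℝ) ^ 2 * (2 * Real.sqrt n) ^ m := by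
          rw [hm]
          push_cast
          exact le_of_eq (by ring)
  · filter_upwards with x
    intro θ _
    exact hder2 x θ

/-- moment bound: `∫ ⟪u,x⟫^(2k) ≤ (3k)^k` -/
lemma moment_bound (hn : 4 ≤ n)
    (hinv : ∀ e : EuclideanSpace ℝ (Fin n) ≃ₗᵢ[ℝ] EuclideanSpace ℝ (Fin n), σ.map e = σ)
    (hae : ∀ᵐ x ∂σ, ‖x‖ = Real.sqrt n)
    {u : EuclideanSpace ℝ (Fin n)} (hu : ‖u‖ = 1) (k : ℕ) :
    ∫ x, ⟪u, x⟫ ^ (2 * k) ∂σ ≤ (3 * (k : ℝ)) ^ k := by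
  induction k with
  | zero => simp
  | succ k ih =>
    classical
    have hfr : Module.finrank ℝ (EuclideanSpace ℝ (Fin n)) = n := finrank_euclideanSpace_fin
    haveI : Fact (Module.finrank ℝ (EuclideanSpace ℝ (Fin n)) = (n - 1) + 1) :=
      ⟨by rw [hfr]; omega⟩
    have hu0 : u ≠ 0 := by
      intro h; rw [h, norm_zero] at hu; norm_num at hu
    set W : Submodule ℝ (EuclideanSpace ℝ (Fin n)) := (Submodule.span ℝ {u})ᗮ with hW
    have hdim : Module.finrank ℝ W = n - 1 := Submodule.finrank_orthogonal_span_singleton hu0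
    set B := stdOrthonormalBasis ℝ W with hB
    set d := Module.finrank ℝ W with hd
    set v : Fin d → EuclideanSpace ℝ (Fin n) := fun i => ((B i : W) : EuclideanSpace ℝ (Fin n))
      with hv
    have hvnorm : ∀ i, ‖v i‖ = 1 := fun i => B.orthonormal.1 i
    have hvu : ∀ i, ⟪u, v i⟫ = 0 := fun i =>
      Submodule.mem_orthogonal_singleton_iff_inner_right.mp (B i).2
    have hON : Orthonormal ℝ v := by
      rw [orthonormal_iff_ite]
      intro i l
      have := (orthonormal_iff_ite.mp B.orthonormal) i l
      simpa [Submodule.coe_inner] using this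
    set a : EuclideanSpace ℝ (Fin n) → ℝ := fun x => ⟪u, x⟫ with ha
    have hca : Continuous a := continuous_const.inner continuous_id
    have habd : ∀ᵐ x ∂σ, |a x| ≤ Real.sqrt n := by
      filter_upwards [hae] with x hx
      calc |a x| ≤ ‖u‖ * ‖x‖ := abs_real_inner_le_norm u x
      _ = Real.sqrt n := by rw [hu, one_mul, hx]
    have hanneg : ∀ x, 0 ≤ a x ^ (2 * k) := fun x => by
      rw [pow_mul]; exact pow_nonneg (sq_nonneg _) k
    have hanneg2 : ∀ x, 0 ≤ a x ^ (2 * (k + 1)) := fun x => by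
      rw [pow_mul]; exact pow_nonneg (sq_nonneg _) (k + 1)
    -- recursion identity per direction
    have hrec : ∀ i : Fin d, ∫ x, a x ^ (2 * (k + 1)) ∂σ =
        (2 * (k : ℝ) + 1) * ∫ x, a x ^ (2 * k) * ⟪v i, x⟫ ^ 2 ∂σ := by
      intro i
      have h2 : 2 * (k + 1) = 2 * k + 2 := by ring
      rw [h2]
      have hvui : ⟪u, v i⟫ = (0:ℝ) := hvu i
      exact moment_rec hinv hae hu (hvnorm i) hvui k
    -- integrability
    have hintM : Integrable (fun x => a x ^ (2 * k)) σ := by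
      refine integrable_of_bound _ ((hca.pow _).aestronglyMeasurable)
        (Real.sqrt n ^ (2 * k)) ?_
      filter_upwards [habd] with x h1
      rw [abs_pow]; exact pow_le_pow_left₀ (abs_nonneg _) h1 _
    have hintbi : ∀ i : Fin d, Integrable (fun x => a x ^ (2 * k) * ⟪v i, x⟫ ^ 2) σ := by
      intro i
      refine integrable_of_bound _ (((hca.pow _).mul
        ((continuous_const.inner continuous_id :
          Continuous fun x : EuclideanSpace ℝ (Fin n) => (⟪v i, x⟫ : ℝ)).pow 2)).aestronglyMeasurable)
        (Real.sqrt n ^ (2 * k) * Real.sqrt n ^ 2) ?_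
      filter_upwards [habd, hae] with x h1 h2
      rw [abs_mul, abs_pow, abs_pow]
      refine mul_le_mul (pow_le_pow_left₀ (abs_nonneg _) h1 _)
        (pow_le_pow_left₀ (abs_nonneg _) ?_ _) (by positivity) (by positivity)
      calc |(⟪v i, x⟫ : ℝ)| ≤ ‖v i‖ * ‖x‖ := abs_real_inner_le_norm _ _
      _ = Real.sqrt n := by rw [hvnorm i, one_mul, h2]
    have hintsum : Integrable (fun x => a x ^ (2 * k) * ∑ i : Fin d, ⟪v i, x⟫ ^ 2) σ := by
      have : (fun x => a x ^ (2 * k) * ∑ i : Fin d, (⟪v i, x⟫:ℝ) ^ 2)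
          = fun x => ∑ i : Fin d, a x ^ (2 * k) * ⟪v i, x⟫ ^ 2 := by
        funext x; rw [Finset.mul_sum]
      rw [this]
      exact integrable_finset_sum _ (fun i _ => hintbi i)
    -- sum the recursion over i
    have hd3 : 3 ≤ d := by rw [hdim]; omega
    have hdpos : (0:ℝ) < (d:ℝ) := by
      have : 0 < d := by omega
      exact_mod_cast this
    set M := ∫ x, a x ^ (2 * k) ∂σ with hM
    set I := ∫ x, a x ^ (2 * (k + 1)) ∂σ with hI
    have hMnn : 0 ≤ M := integral_nonneg hanneg
    have hsum : (d : ℝ) * I =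
        (2 * (k : ℝ) + 1) * ∫ x, a x ^ (2 * k) * ∑ i : Fin d, ⟪v i, x⟫ ^ 2 ∂σ := by
      have h1 : ∫ x, a x ^ (2 * k) * ∑ i : Fin d, (⟪v i, x⟫ : ℝ) ^ 2 ∂σ
          = ∑ i : Fin d, ∫ x, a x ^ (2 * k) * ⟪v i, x⟫ ^ 2 ∂σ := by
        rw [show (fun x => a x ^ (2 * k) * ∑ i : Fin d, (⟪v i, x⟫ : ℝ) ^ 2)
          = fun x => ∑ i : Fin d, a x ^ (2 * k) * ⟪v i, x⟫ ^ 2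
          from funext fun x => Finset.mul_sum _ _ _]
        exact integral_finset_sum _ fun i _ => hintbi i
      rw [h1, Finset.mul_sum]
      calc (d : ℝ) * I = ∑ _i : Fin d, I := by
            rw [Finset.sum_const, Finset.card_univ, Fintype.card_fin, nsmul_eq_mul]
      _ = ∑ i : Fin d, (2 * (k : ℝ) + 1) * ∫ x, a x ^ (2 * k) * ⟪v i, x⟫ ^ 2 ∂σ :=
            Finset.sum_congr rfl fun i _ => hrec i
    have hb2 : ∫ x, a x ^ (2 * k) * ∑ i : Fin d, ⟪v i, x⟫ ^ 2 ∂σ ≤ (n : ℝ) * M := by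
      have hc : ∫ x, a x ^ (2 * k) * (n : ℝ) ∂σ = (n : ℝ) * M := by
        rw [integral_mul_const, mul_comm]
      rw [← hc]
      refine integral_mono_ae hintsum (hintM.mul_const _) ?_
      filter_upwards [hae] with x hx
      have hS : ∑ i : Fin d, (⟪v i, x⟫ : ℝ) ^ 2 ≤ (n : ℝ) := by
        have hb := hON.sum_inner_products_le (s := Finset.univ) x
        have heq : ∑ i : Fin d, (⟪v i, x⟫ : ℝ) ^ 2
            = ∑ i : Fin d, ‖(⟪v i, x⟫ : ℝ)‖ ^ 2 :=
          Finset.sum_congr rfl fun i _ => by rw [Real.norm_eq_abs, sq_abs]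
        rw [heq]
        calc ∑ i : Fin d, ‖(⟪v i, x⟫ : ℝ)‖ ^ 2 ≤ ‖x‖ ^ 2 := hb
        _ = (n : ℝ) := by rw [hx, Real.sq_sqrt (by positivity)]
      exact mul_le_mul_of_nonneg_left hS (hanneg x)
    have hdI : (d : ℝ) * I ≤ (2 * (k : ℝ) + 1) * ((n : ℝ) * M) := by
      rw [hsum]; exact mul_le_mul_of_nonneg_left hb2 (by positivity)
    have hkey : I ≤ 3 * ((k : ℝ) + 1) * M := by
      have hdr : (d : ℝ) = (n : ℝ) - 1 := by
        rw [hdim, Nat.cast_sub (by omega : 1 ≤ n)]; norm_num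
      have hn4 : (4 : ℝ) ≤ (n : ℝ) := by exact_mod_cast hn
      have hk0 : (0 : ℝ) ≤ (k : ℝ) := Nat.cast_nonneg k
      have hineq : (2 * (k : ℝ) + 1) * (n : ℝ) ≤ 3 * ((k : ℝ) + 1) * ((n : ℝ) - 1) := by
        nlinarith [mul_nonneg hk0 (by linarith : (0 : ℝ) ≤ (n : ℝ) - 4)]
      refine le_of_mul_le_mul_left ?_ hdpos
      calc (d : ℝ) * I ≤ (2 * (k : ℝ) + 1) * ((n : ℝ) * M) := hdI
      _ = ((2 * (k : ℝ) + 1) * (n : ℝ)) * M := by ring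
      _ ≤ (3 * ((k : ℝ) + 1) * ((n : ℝ) - 1)) * M := mul_le_mul_of_nonneg_right hineq hMnn
      _ = (d : ℝ) * (3 * ((k : ℝ) + 1) * M) := by rw [hdr]; ring
    push_cast
    calc I ≤ 3 * ((k : ℝ) + 1) * M := hkey
    _ ≤ 3 * ((k : ℝ) + 1) * (3 * (k : ℝ)) ^ k :=
        mul_le_mul_of_nonneg_left ih (by positivity)
    _ ≤ 3 * ((k : ℝ) + 1) * (3 * ((k : ℝ) + 1)) ^ k := by
        refine mul_le_mul_of_nonneg_left
          (pow_le_pow_left₀ (show (0:ℝ) ≤ 3 * (k : ℝ) by positivity)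
            (show 3 * (k : ℝ) ≤ 3 * ((k : ℝ) + 1) by linarith) k) (by positivity)
    _ = (3 * ((k : ℝ) + 1)) ^ (k + 1) := by rw [pow_succ]; ring

end MomentRec

end Stmt15Aux

set_option maxHeartbeats 2000000 in
open Stmt15Aux in
theorem stmt_15 :
    ∃ K : ℝ, 0 < K ∧
      ∀ (n : ℕ), 4 ≤ n →
      ∀ σ : Measure (EuclideanSpace ℝ (Fin n)), IsProbabilityMeasure σ →
        (∀ e : EuclideanSpace ℝ (Fin n) ≃ₗᵢ[ℝ] EuclideanSpace ℝ (Fin n), σ.map e = σ) →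
        σ {x | ‖x‖ = Real.sqrt n} = 1 →
        ∀ (w : EuclideanSpace ℝ (Fin n)), ‖w‖ = 1 → ∀ t : ℝ,
        ∀ f : EuclideanSpace ℝ (Fin n) → ℝ, Measurable f →
          (∀ x, f x = 1 ∨ f x = -1) →
        ∀ ε : ℝ, ε ∈ Set.Ioo (0 : ℝ) (1 / 2) →
          (σ {x | f x ≠ (if t ≤ ⟪w, x⟫ then (1 : ℝ) else -1)}).toReal = ε →
          ‖∫ x, (if t ≤ ⟪w, x⟫ then (1 : ℝ) else -1) • x ∂σ‖ - ‖∫ x, f x • x ∂σ‖ ≤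
            K * ε * Real.sqrt (Real.log (1 / ε)) := by
  classical
  refine ⟨12, by norm_num, ?_⟩
  intro n hn σ hprob hinv hsph w hw t f hfmeas hfpm ε hε hεeq
  haveI := hprob
  set L : ℝ := Real.log (1 / ε) with hLdef
  have hε0 : 0 < ε := hε.1
  have hε2 : ε < 1 / 2 := hε.2
  have h2ε : 2 < 1 / ε := by rw [lt_div_iff₀ hε0]; linarith
  have hLpos : 0 < L := Real.log_pos (by linarith)
  have hLlog2 : Real.log 2 ≤ L := Real.log_le_log (by norm_num) (by linarith)
  have hlog2 : (0.6931471803 : ℝ) < Real.log 2 := Real.log_two_gt_d9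
  have hLhalf : (1/2 : ℝ) ≤ L := by linarith
  have hsqrtL : 0 ≤ Real.sqrt L := Real.sqrt_nonneg L
  have hRHS0 : 0 ≤ 12 * ε * Real.sqrt L := by positivity
  -- halfspace function
  set h : EuclideanSpace ℝ (Fin n) → ℝ := fun x => if t ≤ ⟪w, x⟫ then (1:ℝ) else -1 with hh
  have hmeas_h : Measurable h := by
    refine Measurable.ite ?_ measurable_const measurable_const
    exact measurableSet_le measurable_const
      (continuous_const.inner continuous_id : Continuous
        fun x : EuclideanSpace ℝ (Fin n) => (⟪w, x⟫ : ℝ)).measurable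
  have hhpm : ∀ x, h x = 1 ∨ h x = -1 := fun x => by
    by_cases hc : t ≤ ⟪w, x⟫
    · exact Or.inl (if_pos hc)
    · exact Or.inr (if_neg hc)
  have hae : ∀ᵐ x ∂σ, ‖x‖ = Real.sqrt n := ae_sphere hsph
  -- the disagreement set
  set S : Set (EuclideanSpace ℝ (Fin n)) := {x | f x ≠ h x} with hS
  have hSmeas : MeasurableSet S := (measurableSet_eq_fun hfmeas hmeas_h).compl
  have hεS : (σ S).toReal = ε := hεeq
  -- integrability of the vector fields
  have hsm_id : AEStronglyMeasurable (fun x : EuclideanSpace ℝ (Fin n) => x) σ :=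
    aestronglyMeasurable_id
  have hint_vec : ∀ (g : EuclideanSpace ℝ (Fin n) → ℝ), Measurable g →
      (∀ x, g x = 1 ∨ g x = -1) → Integrable (fun x => g x • x) σ := by
    intro g hg hgpm
    refine (integrable_const (Real.sqrt n)).mono'
      (hg.aestronglyMeasurable.smul hsm_id) ?_
    filter_upwards [hae] with x hx
    rw [norm_smul, Real.norm_eq_abs]
    have : |g x| = 1 := by rcases hgpm x with h1 | h1 <;> simp [h1]
    rw [this, one_mul, hx]
  have hint_h : Integrable (fun x => h x • x) σ := hint_vec h hmeas_h hhpm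
  have hint_f : Integrable (fun x => f x • x) σ := hint_vec f hfmeas hfpm
  have hint_sub : Integrable (fun x => (h x - f x) • x) σ := by
    have := hint_h.sub hint_f
    refine this.congr (Filter.Eventually.of_forall fun x => ?_)
    simp [sub_smul]
  -- first reduction
  have hstep1 : ‖∫ x, h x • x ∂σ‖ - ‖∫ x, f x • x ∂σ‖ ≤ ‖∫ x, (h x - f x) • x ∂σ‖ := by
    have h1 : ∫ x, (h x - f x) • x ∂σ = (∫ x, h x • x ∂σ) - ∫ x, f x • x ∂σ := by
      rw [← integral_sub hint_h hint_f]
      exact integral_congr_ae (Filter.Eventually.of_forall fun x => by simp [sub_smul])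
    rw [h1]
    exact norm_sub_norm_le _ _
  set Ihf : EuclideanSpace ℝ (Fin n) := ∫ x, (h x - f x) • x ∂σ with hIhf
  show ‖∫ x, h x • x ∂σ‖ - ‖∫ x, f x • x ∂σ‖ ≤ 12 * ε * Real.sqrt L
  by_cases hzero : Ihf = 0
  · rw [hIhf] at hzero
    calc ‖∫ x, h x • x ∂σ‖ - ‖∫ x, f x • x ∂σ‖ ≤ ‖∫ x, (h x - f x) • x ∂σ‖ := hstep1
    _ = 0 := by rw [hzero, norm_zero]
    _ ≤ 12 * ε * Real.sqrt L := hRHS0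
  -- unit vector in the direction of the difference
  set u : EuclideanSpace ℝ (Fin n) := ‖Ihf‖⁻¹ • Ihf with hu_def
  have hIhfn : ‖Ihf‖ ≠ 0 := fun hc => hzero (norm_eq_zero.mp hc)
  have hu : ‖u‖ = 1 := by
    rw [hu_def, norm_smul, norm_inv, norm_norm, inv_mul_cancel₀ hIhfn]
  have hnorm_eq : ‖Ihf‖ = ⟪u, Ihf⟫ := by
    rw [hu_def, real_inner_smul_left, real_inner_self_eq_norm_sq]
    field_simp
  have habd : ∀ᵐ x ∂σ, |(⟪u, x⟫ : ℝ)| ≤ Real.sqrt n := by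
    filter_upwards [hae] with x hx
    calc |(⟪u, x⟫ : ℝ)| ≤ ‖u‖ * ‖x‖ := abs_real_inner_le_norm u x
    _ = Real.sqrt n := by rw [hu, one_mul, hx]
  have hca : Continuous fun x : EuclideanSpace ℝ (Fin n) => (⟪u, x⟫ : ℝ) :=
    continuous_const.inner continuous_id
  -- express the norm as an integral
  have hstep2 : ‖Ihf‖ = ∫ x, (h x - f x) * ⟪u, x⟫ ∂σ := by
    rw [hnorm_eq, hIhf, ← integral_inner hint_sub u]
    exact integral_congr_ae (Filter.Eventually.of_forall fun x =>
      real_inner_smul_right u x (h x - f x))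
  -- pointwise bound by the indicator
  have hint_lhs : Integrable (fun x => (h x - f x) * ⟪u, x⟫) σ := by
    refine integrable_of_bound _ (((hmeas_h.sub hfmeas).mul
      hca.measurable).aestronglyMeasurable) (2 * Real.sqrt n) ?_
    filter_upwards [habd] with x hx
    rw [abs_mul]
    have h1 : |h x - f x| ≤ 2 := by
      rcases hhpm x with h1 | h1 <;> rcases hfpm x with h2 | h2 <;>
        rw [h1, h2] <;> norm_num
    exact mul_le_mul h1 hx (abs_nonneg _) (by norm_num)
  have hint_rhs : Integrable (fun x => 2 * (S.indicator (fun _ => (1:ℝ)) x * |(⟪u, x⟫ : ℝ)|)) σ := by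
    refine integrable_of_bound _ ((measurable_const.mul
      ((measurable_const.indicator hSmeas).mul hca.measurable.abs)).aestronglyMeasurable)
      (2 * Real.sqrt n) ?_
    filter_upwards [habd] with x hx
    rw [abs_mul, abs_mul, abs_abs]
    have hind : |S.indicator (fun _ => (1:ℝ)) x| ≤ 1 := by
      rw [Set.indicator_apply]
      by_cases hc : x ∈ S <;> simp [hc]
    calc |(2:ℝ)| * (|S.indicator (fun _ => (1:ℝ)) x| * |(⟪u, x⟫ : ℝ)|)
        ≤ 2 * (1 * Real.sqrt n) := by
          rw [abs_two]
          refine mul_le_mul_of_nonneg_left ?_ (by norm_num)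
          exact mul_le_mul hind hx (abs_nonneg _) (by norm_num)
    _ = 2 * Real.sqrt n := by ring
  have hstep3 : ∫ x, (h x - f x) * ⟪u, x⟫ ∂σ ≤
      ∫ x, 2 * (S.indicator (fun _ => (1:ℝ)) x * |(⟪u, x⟫ : ℝ)|) ∂σ := by
    refine integral_mono hint_lhs hint_rhs fun x => ?_
    by_cases hc : x ∈ S
    · rw [Set.indicator_of_mem hc]
      have h1 : |h x - f x| ≤ 2 := by
        rcases hhpm x with h1 | h1 <;> rcases hfpm x with h2 | h2 <;>
          rw [h1, h2] <;> norm_num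
      calc (h x - f x) * ⟪u, x⟫ ≤ |(h x - f x) * ⟪u, x⟫| := le_abs_self _
      _ = |h x - f x| * |(⟪u, x⟫ : ℝ)| := abs_mul _ _
      _ ≤ 2 * |(⟪u, x⟫ : ℝ)| := mul_le_mul_of_nonneg_right h1 (abs_nonneg _)
      _ = 2 * (1 * |(⟪u, x⟫ : ℝ)|) := by ring
    · rw [Set.indicator_of_notMem hc]
      have hfx : f x = h x := not_not.mp hc
      rw [hfx, sub_self, zero_mul]
      simp
  -- Hölder step
  set k := ⌈L⌉₊ with hk
  have hk0 : 0 < k := Nat.ceil_pos.mpr hLpos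
  have hk1 : (1:ℝ) ≤ (k:ℝ) := by exact_mod_cast hk0
  have hkL : L ≤ (k:ℝ) := Nat.le_ceil L
  have hkup : (k:ℝ) ≤ L + 1 := by
    have := Nat.ceil_lt_add_one (le_of_lt hLpos)
    linarith
  set q : ℝ := ((2 * k : ℕ) : ℝ) with hq
  have hqeq : q = 2 * (k:ℝ) := by rw [hq]; push_cast; ring
  have hq2 : (2:ℝ) ≤ q := by rw [hqeq]; linarith
  have hq1 : 1 < q := by linarith
  have hqpos : (0:ℝ) < q := by linarith
  have hpq : (Real.conjExponent q).HolderConjugate q :=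
    (Real.HolderConjugate.conjExponent hq1).symm
  set p : ℝ := Real.conjExponent q with hp
  have hppos : 0 < p := hpq.pos
  have hmem1 : MemLp (S.indicator (fun _ => (1:ℝ))) (ENNReal.ofReal p) σ := by
    refine MemLp.of_bound ((measurable_const.indicator hSmeas).aestronglyMeasurable) 1 ?_
    filter_upwards with x
    rw [Real.norm_eq_abs, Set.indicator_apply]
    by_cases hc : x ∈ S <;> simp [hc]
  have hmem2 : MemLp (fun x => |(⟪u, x⟫ : ℝ)|) (ENNReal.ofReal q) σ := by
    refine MemLp.of_bound (hca.abs.aestronglyMeasurable) (Real.sqrt n) ?_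
    filter_upwards [habd] with x hx
    rw [Real.norm_eq_abs, abs_abs]; exact hx
  have hHold := integral_mul_le_Lp_mul_Lq_of_nonneg hpq
    (Filter.Eventually.of_forall fun x => Set.indicator_nonneg (fun _ _ => zero_le_one) x)
    (Filter.Eventually.of_forall fun x => abs_nonneg _)
    hmem1 hmem2
  have hid1 : ∫ x, S.indicator (fun _ => (1:ℝ)) x ^ p ∂σ = ε := by
    have heq : (fun x => S.indicator (fun _ => (1:ℝ)) x ^ p) = S.indicator (fun _ => (1:ℝ)) := by
      funext x
      rw [Set.indicator_apply]
      by_cases hc : x ∈ S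
      · simp [hc, Real.one_rpow]
      · simp [hc, Real.zero_rpow (ne_of_gt hppos)]
    rw [heq, integral_indicator_const (1:ℝ) hSmeas, smul_eq_mul, mul_one, measureReal_def, hεS]
  have hmomb := moment_bound hn hinv hae hu k
  have hid2 : ∫ x, |(⟪u, x⟫ : ℝ)| ^ q ∂σ = ∫ x, (⟪u, x⟫ : ℝ) ^ (2 * k) ∂σ := by
    refine integral_congr_ae (Filter.Eventually.of_forall fun x => ?_)
    show |(⟪u, x⟫ : ℝ)| ^ (((2 * k : ℕ) : ℕ) : ℝ) = (⟪u, x⟫ : ℝ) ^ (2 * k)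
    rw [Real.rpow_natCast, Even.pow_abs ⟨k, by ring⟩]
  have hint_q_nonneg : 0 ≤ ∫ x, |(⟪u, x⟫ : ℝ)| ^ q ∂σ :=
    integral_nonneg fun x => Real.rpow_nonneg (abs_nonneg _) q
  have h3k : (0:ℝ) ≤ 3 * (k:ℝ) := by positivity
  have h9 : Real.sqrt 9 = 3 := by
    rw [show (9:ℝ) = 3 ^ 2 by norm_num, Real.sqrt_sq (by norm_num : (0:ℝ) ≤ 3)]
  have hfac2 : (∫ x, |(⟪u, x⟫ : ℝ)| ^ q ∂σ) ^ (1/q) ≤ 3 * Real.sqrt L := by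
    calc (∫ x, |(⟪u, x⟫ : ℝ)| ^ q ∂σ) ^ (1/q) ≤ ((3 * (k:ℝ)) ^ k) ^ (1/q) := by
          refine Real.rpow_le_rpow hint_q_nonneg ?_ (by positivity)
          rw [hid2]; exact hmomb
    _ = (3 * (k:ℝ)) ^ ((k:ℝ) * (1/q)) := by
          rw [← Real.rpow_natCast (3 * (k:ℝ)) k, ← Real.rpow_mul h3k]
    _ = (3 * (k:ℝ)) ^ ((1:ℝ)/2) := by
          congr 1
          rw [hqeq]
          have hkne : (k:ℝ) ≠ 0 := by linarith
          field_simp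
    _ = Real.sqrt (3 * (k:ℝ)) := by
          rw [Real.sqrt_eq_rpow]
    _ ≤ Real.sqrt (9 * L) := Real.sqrt_le_sqrt (by linarith)
    _ = 3 * Real.sqrt L := by
          rw [Real.sqrt_mul (by norm_num : (0:ℝ) ≤ 9), h9]
  have hεq : ε ^ ((1:ℝ)/p) ≤ 2 * ε := by
    have h1p : (1:ℝ)/p = 1 - 1/q := by
      have hinv := hpq.inv_add_inv_eq_one
      rw [one_div, one_div]; linarith
    have hden : (0:ℝ) < ε ^ ((1:ℝ)/q) := Real.rpow_pos_of_pos hε0 _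
    have hkey : (1/2 : ℝ) ≤ ε ^ ((1:ℝ)/q) := by
      have hεlog : Real.log ε = -L := by rw [hLdef, one_div, Real.log_inv]; ring
      have h2L : 2 * L ≤ q := by rw [hqeq]; linarith
      have hLq : L * (1/q) ≤ 1/2 := by
        rw [mul_one_div, div_le_iff₀ hqpos]; linarith
      calc (1/2:ℝ) = Real.exp (Real.log (1/2)) := (Real.exp_log (by norm_num)).symm
      _ ≤ Real.exp (-L * (1/q)) := by
            refine Real.exp_le_exp.mpr ?_
            rw [one_div, Real.log_inv]
            have : (1/2:ℝ) ≤ Real.log 2 := by linarith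
            nlinarith [hLpos, hqpos, hLq]
      _ = ε ^ ((1:ℝ)/q) := by
            rw [Real.rpow_def_of_pos hε0, hεlog]
    rw [h1p, Real.rpow_sub hε0, Real.rpow_one, div_le_iff₀ hden]
    nlinarith [hkey, hε0]
  calc ‖∫ x, h x • x ∂σ‖ - ‖∫ x, f x • x ∂σ‖ ≤ ‖Ihf‖ := hstep1
  _ = ∫ x, (h x - f x) * ⟪u, x⟫ ∂σ := hstep2
  _ ≤ ∫ x, 2 * (S.indicator (fun _ => (1:ℝ)) x * |(⟪u, x⟫ : ℝ)|) ∂σ := hstep3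
  _ = 2 * ∫ x, S.indicator (fun _ => (1:ℝ)) x * |(⟪u, x⟫ : ℝ)| ∂σ := integral_const_mul 2 _
  _ ≤ 2 * ((∫ x, S.indicator (fun _ => (1:ℝ)) x ^ p ∂σ) ^ (1/p)
        * (∫ x, |(⟪u, x⟫ : ℝ)| ^ q ∂σ) ^ (1/q)) :=
      mul_le_mul_of_nonneg_left hHold (by norm_num)
  _ = 2 * (ε ^ ((1:ℝ)/p) * (∫ x, |(⟪u, x⟫ : ℝ)| ^ q ∂σ) ^ (1/q)) := by rw [hid1]
  _ ≤ 2 * ((2 * ε) * (3 * Real.sqrt L)) := by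
      refine mul_le_mul_of_nonneg_left ?_ (by norm_num)
      exact mul_le_mul hεq hfac2 (Real.rpow_nonneg hint_q_nonneg _) (by positivity)
  _ = 12 * ε * Real.sqrt L := by ring
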